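/- The sunny-side-up at (0,0) is not sofic on the Barbieri–Sablik H-graph: there do not exist a finite colour set B, a tileset Θ ⊆ B × {x,y,z} × B and a map π : B → {0,1} such that the set {π ∘ τ : τ a valid Θ-tiling of the H-graph} equals the singleton consisting of the indicator function of {(0,0)} ⊆ ℕ × ℤ. -/

import Mathlib

/-!  Common definitions for the Barbieri–Sablik H-graph.  Its vertex set is `ℕ × ℤ`. -/

/-- The three edge labels of the H-graph. -/
inductive HLab : Type
  | x : HLab
  | y : HLab
  | z : HLab
deriving DecidableEq

instance : Primcodable HLab :=
  Primcodable.ofEquiv (Fin 3)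
    { toFun := fun l => match l with | .x => 0 | .y => 1 | .z => 2
      invFun := fun i => match i with | 0 => .x | 1 => .y | 2 => .z
      left_inv := by intro l; cases l <;> rfl
      right_inv := by intro i; fin_cases i <;> rfl }

/-- The `x`-neighbour of a vertex: `(2m,n)` and `(2m+1,n)` are exchanged. -/
def xNbr : ℕ × ℤ → ℕ × ℤ := fun p => (if p.1 % 2 = 0 then p.1 + 1 else p.1 - 1, p.2)

/-- The `y`-neighbour of a vertex: for even `k ≥ 2` and `2^(v₂ k) ∣ n`, the vertices
`(k-1,n)` and `(k,n)` are exchanged; all other vertices (namely `(0,n)`, and `(k-1,n)`,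
`(k,n)` with `2^(v₂ k) ∤ n`) carry a `y`-labelled loop, i.e. are fixed. -/
def yNbr : ℕ × ℤ → ℕ × ℤ := fun p =>
  if p.1 = 0 then p
  else if p.1 % 2 = 1 then
    (if ((2 : ℤ) ^ padicValNat 2 (p.1 + 1)) ∣ p.2 then (p.1 + 1, p.2) else p)
  else
    (if ((2 : ℤ) ^ padicValNat 2 p.1) ∣ p.2 then (p.1 - 1, p.2) else p)

/-- A map `τ : ℕ × ℤ → B` is a valid `Θ`-tiling of the H-graph if the endpoint colours of
every labelled edge (in both directions, for the unoriented `x`- and `y`-edges) form a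
triple in `Θ`; there is a `z`-labelled edge from `(m,n)` to `(m,n+1)` for every vertex. -/
def HValid {B : Type} (Θ : Set (B × HLab × B)) (τ : ℕ × ℤ → B) : Prop :=
  ∀ p : ℕ × ℤ,
    (τ p, HLab.z, τ (p.1, p.2 + 1)) ∈ Θ ∧
    (τ p, HLab.x, τ (xNbr p)) ∈ Θ ∧
    (τ p, HLab.y, τ (yNbr p)) ∈ Θ

/-- Shifting by a multiple of `2^v` does not change divisibility by `2^v`. -/
lemma two_pow_shift_dvd {v L : ℕ} (h : v ≤ L) (n : ℤ) :
    ((2:ℤ)^v ∣ n + 2^L) ↔ (2:ℤ)^v ∣ n := by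
  have hd : (2:ℤ)^v ∣ (2:ℤ)^L := pow_dvd_pow 2 h
  constructor
  · intro hh
    have := dvd_sub hh hd
    simpa using this
  · intro hh
    exact dvd_add hh hd

/-- In columns `m < 2^L`, the `y`-neighbour commutes with the vertical shift by `2^L`. -/
lemma yNbr_shift (p : ℕ × ℤ) (L : ℕ) (hp : p.1 < 2^L) :
    yNbr (p.1, p.2 + 2^L) = ((yNbr p).1, p.2 + 2^L) := by
  rcases p with ⟨m, n⟩
  simp only at hp ⊢
  by_cases h0 : m = 0
  · simp [yNbr, h0]
  by_cases h1 : m % 2 = 1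
  · have hv : padicValNat 2 (m+1) ≤ L := by
      have hdvd : 2 ^ padicValNat 2 (m+1) ∣ m+1 := pow_padicValNat_dvd
      have hle : 2 ^ padicValNat 2 (m+1) ≤ m+1 := Nat.le_of_dvd (Nat.succ_pos m) hdvd
      have h2 : 2 ^ padicValNat 2 (m+1) ≤ 2^L := le_trans hle hp
      exact (Nat.pow_le_pow_iff_right (by norm_num)).mp h2
    simp only [yNbr, h0, h1, if_false, if_true]
    by_cases hd : (2:ℤ) ^ padicValNat 2 (m+1) ∣ n
    · rw [if_pos ((two_pow_shift_dvd hv n).mpr hd), if_pos hd]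
    · rw [if_neg (fun hh => hd ((two_pow_shift_dvd hv n).mp hh)), if_neg hd]
  · have hv : padicValNat 2 m ≤ L := by
      have hdvd : 2 ^ padicValNat 2 m ∣ m := pow_padicValNat_dvd
      have hle : 2 ^ padicValNat 2 m ≤ m := Nat.le_of_dvd (Nat.pos_of_ne_zero h0) hdvd
      have h2 : 2 ^ padicValNat 2 m ≤ 2^L := le_of_lt (lt_of_le_of_lt hle hp)
      exact (Nat.pow_le_pow_iff_right (by norm_num)).mp h2
    simp only [yNbr, h0, h1, if_false, if_true]
    by_cases hd : (2:ℤ) ^ padicValNat 2 m ∣ n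
    · rw [if_pos ((two_pow_shift_dvd hv n).mpr hd), if_pos hd]
    · rw [if_neg (fun hh => hd ((two_pow_shift_dvd hv n).mp hh)), if_neg hd]

/-- **The sunny-side-up at `(0,0)` is not sofic on the Barbieri–Sablik H-graph**: there are
no finite colour set `B`, tileset `Θ ⊆ B × {x,y,z} × B` and projection `π : B → {0,1}`
(here `{0,1}` is `Bool`) such that the projections `π ∘ τ` of the valid `Θ`-tilings `τ` are
exactly the indicator function of `{(0,0)} ⊆ ℕ × ℤ`. -/
theorem hgraph_sunny_side_up_not_sofic :
    ¬ ∃ (B : Type) (_ : Fintype B) (Θ : Set (B × HLab × B)) (π : B → Bool),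
        (fun τ : ℕ × ℤ → B => π ∘ τ) '' {τ | HValid Θ τ}
          = {fun p : ℕ × ℤ => decide (p = ((0 : ℕ), (0 : ℤ)))} := by
  rintro ⟨B, hB, Θ, π, h⟩
  classical
  -- extract a valid tiling τ projecting to the sunny-side-up
  have hδ : (fun p : ℕ × ℤ => decide (p = ((0 : ℕ), (0 : ℤ)))) ∈
      (fun τ : ℕ × ℤ → B => π ∘ τ) '' {τ | HValid Θ τ} := by
    rw [h]; exact rfl
  obtain ⟨τ, hτ, hπτ⟩ := hδ
  have hτ' : HValid Θ τ := hτ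
  -- the shifted configurations
  set 𝒰 : Ultrafilter ℕ := Filter.hyperfilter ℕ with h𝒰
  -- validity of shifts on initial columns
  have hshift : ∀ (L : ℕ) (p : ℕ × ℤ), p.1 < 2^L →
      (τ (p.1, p.2 + 2^L), HLab.z, τ ((p.1, p.2 + 1).1, (p.1, p.2 + 1).2 + 2^L)) ∈ Θ ∧
      (τ (p.1, p.2 + 2^L), HLab.x, τ ((xNbr p).1, (xNbr p).2 + 2^L)) ∈ Θ ∧
      (τ (p.1, p.2 + 2^L), HLab.y, τ ((yNbr p).1, (yNbr p).2 + 2^L)) ∈ Θ := by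
    intro L p hp
    obtain ⟨hz, hx, hy⟩ := hτ' (p.1, p.2 + 2^L)
    refine ⟨?_, ?_, ?_⟩
    · have : ((p.1, p.2 + 1).1, (p.1, p.2 + 1).2 + (2:ℤ)^L) = (p.1, (p.2 + 2^L) + 1) := by
        simp [add_right_comm]
      rw [this]; exact hz
    · have : xNbr (p.1, p.2 + 2^L) = ((xNbr p).1, (xNbr p).2 + 2^L) := rfl
      rw [this] at hx; exact hx
    · have hy2 : (yNbr p).2 = p.2 := by
        simp only [yNbr]
        split
        · rfl
        split <;> (split <;> rfl)
      rw [yNbr_shift p L hp] at hy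
      rw [hy2]; exact hy
  -- the ultrafilter limit
  have key : ∀ p : ℕ × ℤ, ∃ b : B, ∀ᶠ L in (𝒰 : Filter ℕ), τ (p.1, p.2 + 2^L) = b := by
    intro p
    obtain ⟨b, hb⟩ := (𝒰.map (fun L => τ (p.1, p.2 + 2^L))).eq_pure_of_finite
    refine ⟨b, ?_⟩
    have : {b} ∈ 𝒰.map (fun L => τ (p.1, p.2 + 2^L)) := by
      rw [hb]; exact rfl
    simpa [Ultrafilter.mem_map, Filter.Eventually, Set.preimage] using this
  choose τstar hτstar using key
  -- eventually the column is in range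
  have hrange : ∀ p : ℕ × ℤ, ∀ᶠ L in (𝒰 : Filter ℕ), p.1 < 2^L := by
    intro p
    have hfin : {L : ℕ | L ≤ p.1}.Finite := Set.finite_le_nat p.1
    have hmem : {L : ℕ | L ≤ p.1}ᶜ ∈ 𝒰 := hfin.compl_mem_hyperfilter
    refine Filter.mem_of_superset hmem ?_
    intro L hL
    simp only [Set.mem_compl_iff, Set.mem_setOf_eq, not_le] at hL
    exact lt_trans hL (Nat.lt_two_pow_self (n := L))
  -- the limit is a valid tiling
  have hvalid : HValid Θ τstar := by
    intro p
    have hev := ((((hτstar p).and (hτstar (p.1, p.2 + 1))).and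
      ((hτstar (xNbr p)).and (hτstar (yNbr p)))).and (hrange p))
    obtain ⟨L, ⟨⟨⟨e0, e1⟩, e2, e3⟩, hL⟩⟩ := hev.exists
    obtain ⟨hz, hx, hy⟩ := hshift L p hL
    rw [e0, e1] at hz
    rw [e0, e2] at hx
    rw [e0, e3] at hy
    exact ⟨hz, hx, hy⟩
  -- so its projection is the sunny-side-up
  have hmem : π ∘ τstar ∈ (fun τ : ℕ × ℤ → B => π ∘ τ) '' {τ | HValid Θ τ} :=
    ⟨τstar, hvalid, rfl⟩
  rw [h, Set.mem_singleton_iff] at hmem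
  have htrue : π (τstar (0, 0)) = true := by
    have := congrFun hmem ((0 : ℕ), (0 : ℤ))
    simpa using this
  -- but the value at (0,0) comes from far away in the original tiling
  obtain ⟨L, hL⟩ := (hτstar ((0 : ℕ), (0 : ℤ))).exists
  have hfalse : π (τstar (0, 0)) = false := by
    rw [← hL]
    have := congrFun hπτ ((0 : ℕ), ((0 : ℤ) + 2^L))
    simp only [Function.comp_apply] at this
    rw [this]
    simp [pow_ne_zero]
  rw [htrue] at hfalse
  exact Bool.noConfusion hfalse
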